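/- Let K ≥ 2, let ε > 0, and let Δ_1, …, Δ_K be real numbers with 0 = Δ_1 < Δ_2 ≤ Δ_3 ≤ ⋯ ≤ Δ_K. Then ∑_{r=1}^{∞} ∑_{j=1}^{K} 2^r·Δ_j·exp(−2^r·Δ_j·ε) / (∑_{i=1}^{K} exp(−2^r·Δ_i·ε)) ≤ (1 + 1/log 2)·(log K)/ε. -/

import Mathlib

/-- The analytic core of the optimal `O((log K)/ε)` regret bound for the exponential mechanism
in the deterministic setting: if `0 = Δ 1 < Δ 2 ≤ ⋯ ≤ Δ K` (1-based indices) and `ε > 0`, then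
`∑_{r=1}^∞ ∑_j 2^r * Δ j * exp(-2^r * Δ j * ε) / (∑ i, exp(-2^r * Δ i * ε))
  ≤ (1 + 1/log 2) * (log K) / ε`. -/
theorem tsum_softmax_regret_le (K : ℕ) (hK : 2 ≤ K) (ε : ℝ) (hε : 0 < ε) (Δ : Fin K → ℝ)
    (h0 : Δ ⟨0, by omega⟩ = 0) (h1 : 0 < Δ ⟨1, hK⟩)
    (hmono : ∀ i j : Fin K, 1 ≤ (i : ℕ) → i ≤ j → Δ i ≤ Δ j) :
    (∑' r : ℕ, ∑ j,
        (2 : ℝ) ^ (r + 1) * Δ j * Real.exp (-((2 : ℝ) ^ (r + 1) * Δ j * ε)) /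
          (∑ i, Real.exp (-((2 : ℝ) ^ (r + 1) * Δ i * ε)))) ≤
      (1 + 1 / Real.log 2) * Real.log K / ε := by
  have hΔ : ∀ j : Fin K, 0 ≤ Δ j := by
    intro j
    rcases Nat.eq_zero_or_pos j.1 with h | h
    · have hj : j = ⟨0, by omega⟩ := Fin.ext h
      rw [hj, h0]
    · exact h1.le.trans (hmono ⟨1, hK⟩ j le_rfl (by rw [Fin.le_def]; exact h))
  have hZpos : ∀ c : ℝ, 0 < ∑ i, Real.exp (-(c * Δ i * ε)) := fun c =>
    Finset.sum_pos (fun i _ => Real.exp_pos _) ⟨⟨0, by omega⟩, Finset.mem_univ _⟩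
  have hZ1 : ∀ c : ℝ, (1 : ℝ) ≤ ∑ i, Real.exp (-(c * Δ i * ε)) := by
    intro c
    have := Finset.single_le_sum (f := fun i => Real.exp (-(c * Δ i * ε)))
      (fun i _ => (Real.exp_pos _).le) (Finset.mem_univ (⟨0, by omega⟩ : Fin K))
    simpa [h0] using this
  -- the log-partition values along the doubling grid
  set L : ℕ → ℝ := fun r => Real.log (∑ i, Real.exp (-((2 : ℝ) ^ r * Δ i * ε))) with hL
  -- key per-epoch inequality via Jensen
  have key : ∀ r : ℕ,
      (∑ j, (2 : ℝ) ^ (r + 1) * Δ j * Real.exp (-((2 : ℝ) ^ (r + 1) * Δ j * ε)) /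
          (∑ i, Real.exp (-((2 : ℝ) ^ (r + 1) * Δ i * ε))))
        ≤ 2 / ε * (L r - L (r + 1)) := by
    intro r
    set b : ℝ := (2 : ℝ) ^ (r + 1) with hb
    set a : ℝ := (2 : ℝ) ^ r with ha
    have hab : b = 2 * a := by rw [hb, ha, pow_succ]; ring
    have hZb := hZpos b
    have hZa := hZpos a
    set T : ℝ := ∑ j, b * Δ j * Real.exp (-(b * Δ j * ε)) /
        (∑ i, Real.exp (-(b * Δ i * ε))) with hT
    set w : Fin K → ℝ := fun j => Real.exp (-(b * Δ j * ε)) /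
        (∑ i, Real.exp (-(b * Δ i * ε))) with hw
    have hw0 : ∀ j ∈ Finset.univ, (0 : ℝ) ≤ w j := fun j _ =>
      div_nonneg (Real.exp_pos _).le hZb.le
    have hw1 : ∑ j, w j = 1 := by
      rw [hw, ← Finset.sum_div]
      exact div_self hZb.ne'
    have jensen := convexOn_exp.map_sum_le (p := fun j => a * Δ j * ε) hw0 hw1
      (fun j _ => Set.mem_univ _)
    have hLHS : ∑ j, w j • (a * Δ j * ε) = ε / 2 * T := by
      rw [hT, Finset.mul_sum]
      refine Finset.sum_congr rfl fun j _ => ?_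
      simp only [smul_eq_mul, hw]
      rw [hab]
      field_simp
    have hRHS : ∑ j, w j • Real.exp (a * Δ j * ε)
        = (∑ i, Real.exp (-(a * Δ i * ε))) / (∑ i, Real.exp (-(b * Δ i * ε))) := by
      rw [show (∑ j, w j • Real.exp (a * Δ j * ε))
          = ∑ j, Real.exp (-(a * Δ j * ε)) / (∑ i, Real.exp (-(b * Δ i * ε))) from
        Finset.sum_congr rfl fun j _ => by
          simp only [smul_eq_mul, hw]
          rw [div_mul_eq_mul_div, ← Real.exp_add]
          congr 2
          rw [hab]; ring]
      rw [← Finset.sum_div]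
    rw [hLHS, hRHS] at jensen
    have h3 : ε / 2 * T ≤ Real.log ((∑ i, Real.exp (-(a * Δ i * ε))) /
        (∑ i, Real.exp (-(b * Δ i * ε)))) :=
      (Real.le_log_iff_exp_le (div_pos hZa hZb)).mpr jensen
    rw [Real.log_div hZa.ne' hZb.ne'] at h3
    have hLr : L r - L (r + 1) = Real.log (∑ i, Real.exp (-(a * Δ i * ε)))
        - Real.log (∑ i, Real.exp (-(b * Δ i * ε))) := by
      simp only [hL, ha, hb]
    calc T = 2 / ε * (ε / 2 * T) := by field_simp
      _ ≤ 2 / ε * (Real.log (∑ i, Real.exp (-(a * Δ i * ε)))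
            - Real.log (∑ i, Real.exp (-(b * Δ i * ε)))) :=
        mul_le_mul_of_nonneg_left h3 (by positivity)
      _ = 2 / ε * (L r - L (r + 1)) := by rw [hLr]
  -- partial sums telescope
  have hsum : ∀ n : ℕ, (∑ r ∈ Finset.range n, ∑ j,
      (2 : ℝ) ^ (r + 1) * Δ j * Real.exp (-((2 : ℝ) ^ (r + 1) * Δ j * ε)) /
        (∑ i, Real.exp (-((2 : ℝ) ^ (r + 1) * Δ i * ε)))) ≤ 2 * Real.log K / ε := by
    intro n
    have hL0 : L 0 ≤ Real.log K := by
      apply Real.log_le_log (hZpos _)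
      calc (∑ i, Real.exp (-((2 : ℝ) ^ 0 * Δ i * ε))) ≤ ∑ _i : Fin K, (1 : ℝ) := by
            refine Finset.sum_le_sum fun i _ => ?_
            rw [Real.exp_le_one_iff]
            have : 0 ≤ (2 : ℝ) ^ 0 * Δ i * ε :=
              mul_nonneg (mul_nonneg (by positivity) (hΔ i)) hε.le
            linarith
        _ = K := by simp
    have hLn : 0 ≤ L n := Real.log_nonneg (hZ1 _)
    calc (∑ r ∈ Finset.range n, ∑ j,
          (2 : ℝ) ^ (r + 1) * Δ j * Real.exp (-((2 : ℝ) ^ (r + 1) * Δ j * ε)) /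
            (∑ i, Real.exp (-((2 : ℝ) ^ (r + 1) * Δ i * ε))))
        ≤ ∑ r ∈ Finset.range n, 2 / ε * (L r - L (r + 1)) :=
          Finset.sum_le_sum fun r _ => key r
      _ = 2 / ε * (L 0 - L n) := by rw [← Finset.mul_sum, Finset.sum_range_sub' L n]
      _ ≤ 2 / ε * Real.log K := by
          apply mul_le_mul_of_nonneg_left _ (by positivity)
          linarith
      _ = 2 * Real.log K / ε := by ring
  have hpos : ∀ r : ℕ, 0 ≤ ∑ j,
      (2 : ℝ) ^ (r + 1) * Δ j * Real.exp (-((2 : ℝ) ^ (r + 1) * Δ j * ε)) /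
        (∑ i, Real.exp (-((2 : ℝ) ^ (r + 1) * Δ i * ε))) := by
    intro r
    refine Finset.sum_nonneg fun j _ => div_nonneg ?_ (hZpos _).le
    exact mul_nonneg (mul_nonneg (by positivity) (hΔ j)) (Real.exp_pos _).le
  refine le_trans (Real.tsum_le_of_sum_range_le hpos hsum) ?_
  have hlp := Real.log_pos one_lt_two
  have hle1 : Real.log 2 ≤ 1 := by
    have := Real.log_le_sub_one_of_pos (by norm_num : (0 : ℝ) < 2)
    linarith
  have h2le : (2 : ℝ) ≤ 1 + 1 / Real.log 2 := by
    have : (1 : ℝ) ≤ 1 / Real.log 2 := by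
      rw [le_div_iff₀ hlp]; linarith
    linarith
  have hlogK : 0 ≤ Real.log K :=
    Real.log_nonneg (by exact_mod_cast Nat.one_le_of_lt hK)
  gcongr
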